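/- Let k ≥ 3 and t ≥ ⌊k/2⌋ be integers. Then for every ε > 0, Σ_{1 ≤ q ≤ Q} κ(q)²·Σ_{r | q} r·κ(r)^{2t} ≪_ε Q^ε, uniformly for Q ≥ 1. -/

import Mathlib

open Real

private lemma stmt14_term (k t : ℕ) (hk : 3 ≤ k) (ht1 : 1 ≤ t) (hkt : k ≤ 2*t+1)
    (κ : ℕ → ℝ) (hκ1 : κ 1 = 1)
    (hκA : ∀ p : ℕ, p.Prime → ∀ u : ℕ,
      κ (p ^ (u * k + 1)) = (k : ℝ) * (p : ℝ) ^ (-(u : ℝ) - 1/2))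
    (hκB : ∀ p : ℕ, p.Prime → ∀ u v : ℕ, 2 ≤ v → v ≤ k →
      κ (p ^ (u * k + v)) = (p : ℝ) ^ (-(u : ℝ) - 1))
    (p : ℕ) (hp : p.Prime) (i : ℕ) :
    (p:ℝ)^(i:ℕ) * κ (p^i) ^ (2*t)
      ≤ (k:ℝ)^(2*t) * (p:ℝ) ^ ((((i-1)/k : ℕ) : ℝ) + 1) := by
  have hp1 : (1:ℝ) ≤ (p:ℝ) := by exact_mod_cast hp.one_lt.le
  have hp0 : (0:ℝ) < (p:ℝ) := lt_of_lt_of_le one_pos hp1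
  have hk1 : (1:ℝ) ≤ (k:ℝ) := by exact_mod_cast (by omega : 1 ≤ k)
  have hkr : (k:ℝ) ≤ 2*(t:ℝ)+1 := by exact_mod_cast hkt
  have htr : (1:ℝ) ≤ (t:ℝ) := by exact_mod_cast ht1
  have hkpow : (1:ℝ) ≤ (k:ℝ)^(2*t) := one_le_pow₀ hk1
  have hkpow0 : (0:ℝ) ≤ (k:ℝ)^(2*t) := le_trans zero_le_one hkpow
  rcases Nat.eq_zero_or_pos i with rfl | hi
  · have h1 : (1:ℝ) ≤ (p:ℝ) ^ (((0:ℕ):ℝ) + 1) := by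
      rw [Nat.cast_zero, zero_add, Real.rpow_one]; exact hp1
    have : (1:ℝ) ≤ (k:ℝ)^(2*t) * (p:ℝ) ^ (((0:ℕ):ℝ) + 1) := by nlinarith
    simpa [hκ1] using this
  obtain ⟨j, rfl⟩ : ∃ j, i = j + 1 := ⟨i-1, by omega⟩
  set u := j / k with hu
  have key : j + 1 = u * k + (j % k + 1) := by
    conv_lhs => rw [← Nat.div_add_mod j k]
    rw [← hu]; ring
  have hjr : ((j:ℝ)) + 1 = (u:ℝ) * k + ((j % k : ℕ) + 1) := by exact_mod_cast key
  have hu0 : (0:ℝ) ≤ (u:ℝ) := Nat.cast_nonneg u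
  have hku : (k:ℝ) * u ≤ (2*(t:ℝ)+1) * u := mul_le_mul_of_nonneg_right hkr hu0
  have hexpand : ∀ x : ℝ, (p:ℝ)^((j:ℕ)+1) * ((p:ℝ) ^ x) ^ (2*t)
      = (p:ℝ) ^ (((j:ℝ) + 1) + x * (2*t : ℕ)) := by
    intro x
    rw [← Real.rpow_natCast ((p:ℝ) ^ x) (2*t), ← Real.rpow_mul hp0.le,
      ← Real.rpow_natCast (p:ℝ) (j+1), ← Real.rpow_add hp0]
    push_cast
    ring_nf
  have husimp : ((j + 1 - 1) / k : ℕ) = u := by simp [hu]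
  rw [husimp]
  by_cases hv : j % k = 0
  · have hj' : j = u * k := by
      have := key; rw [hv] at this; omega
    have hκv : κ (p ^ (j+1)) = (k:ℝ) * (p:ℝ) ^ (-(u:ℝ) - 1/2) := by
      rw [key, hv]; exact hκA p hp u
    rw [hκv, mul_pow, ← mul_assoc, mul_comm ((p:ℝ)^((j:ℕ)+1)) ((k:ℝ)^(2*t)), mul_assoc,
      hexpand]
    refine mul_le_mul_of_nonneg_left (Real.rpow_le_rpow_of_exponent_le hp1 ?_) hkpow0
    have hjreq : (j:ℝ) = (u:ℝ) * k := by exact_mod_cast hj'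
    push_cast
    nlinarith
  · have hv2 : 2 ≤ j % k + 1 := by omega
    have hvk : j % k + 1 ≤ k := by
      have := Nat.mod_lt j (show 0 < k by omega); omega
    have hκv : κ (p ^ (j+1)) = (p:ℝ) ^ (-(u:ℝ) - 1) := by
      rw [key]; exact hκB p hp u (j % k + 1) hv2 hvk
    rw [hκv]
    calc (p:ℝ)^((j:ℕ)+1) * ((p:ℝ) ^ (-(u:ℝ) - 1)) ^ (2*t)
        = (p:ℝ) ^ (((j:ℝ) + 1) + (-(u:ℝ) - 1) * (2*t : ℕ)) := hexpand _
      _ ≤ (p:ℝ) ^ ((u:ℝ)+1) := by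
          refine Real.rpow_le_rpow_of_exponent_le hp1 ?_
          have hwk : ((j % k : ℕ) : ℝ) + 1 ≤ (k:ℝ) := by exact_mod_cast hvk
          push_cast
          nlinarith [hjr]
      _ ≤ (k:ℝ)^(2*t) * (p:ℝ) ^ ((u:ℝ)+1) := by
          nlinarith [Real.rpow_nonneg hp0.le ((u:ℝ)+1), Real.rpow_pos_of_pos hp0 ((u:ℝ)+1)]

private lemma stmt14_sq (k t : ℕ) (hk : 3 ≤ k)
    (κ : ℕ → ℝ)
    (hκA : ∀ p : ℕ, p.Prime → ∀ u : ℕ,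
      κ (p ^ (u * k + 1)) = (k : ℝ) * (p : ℝ) ^ (-(u : ℝ) - 1/2))
    (hκB : ∀ p : ℕ, p.Prime → ∀ u v : ℕ, 2 ≤ v → v ≤ k →
      κ (p ^ (u * k + v)) = (p : ℝ) ^ (-(u : ℝ) - 1))
    (p : ℕ) (hp : p.Prime) (j : ℕ) :
    κ (p^(j+1)) ^ 2 ≤ (k:ℝ)^2 * (p:ℝ) ^ (-2*(((j/k : ℕ)) : ℝ) - 1) := by
  have hp1 : (1:ℝ) ≤ (p:ℝ) := by exact_mod_cast hp.one_lt.le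
  have hp0 : (0:ℝ) < (p:ℝ) := lt_of_lt_of_le one_pos hp1
  have hk1 : (1:ℝ) ≤ (k:ℝ) := by exact_mod_cast (by omega : 1 ≤ k)
  set u := j / k with hu
  have key : j + 1 = u * k + (j % k + 1) := by
    conv_lhs => rw [← Nat.div_add_mod j k]
    rw [← hu]; ring
  have hsqexp : ∀ x : ℝ, ((p:ℝ) ^ x) ^ 2 = (p:ℝ) ^ (x * 2) := by
    intro x
    rw [← Real.rpow_natCast ((p:ℝ) ^ x) 2, ← Real.rpow_mul hp0.le]
    norm_num
  by_cases hv : j % k = 0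
  · have hκv : κ (p ^ (j+1)) = (k:ℝ) * (p:ℝ) ^ (-(u:ℝ) - 1/2) := by
      rw [key, hv]; exact hκA p hp u
    rw [hκv, mul_pow, hsqexp]
    have : (-(u:ℝ) - 1/2) * 2 = -2*(u:ℝ) - 1 := by ring
    rw [this]
  · have hv2 : 2 ≤ j % k + 1 := by omega
    have hvk : j % k + 1 ≤ k := by
      have := Nat.mod_lt j (show 0 < k by omega); omega
    have hκv : κ (p ^ (j+1)) = (p:ℝ) ^ (-(u:ℝ) - 1) := by
      rw [key]; exact hκB p hp u (j % k + 1) hv2 hvk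
    rw [hκv, hsqexp]
    calc (p:ℝ) ^ ((-(u:ℝ) - 1) * 2) ≤ (p:ℝ) ^ (-2*(u:ℝ) - 1) := by
          refine Real.rpow_le_rpow_of_exponent_le hp1 ?_
          nlinarith
      _ ≤ (k:ℝ)^2 * (p:ℝ) ^ (-2*(u:ℝ) - 1) := by
          nlinarith [Real.rpow_pos_of_pos hp0 (-2*(u:ℝ) - 1), one_le_pow₀ hk1 (n:=2)]

private lemma stmt14_g (k t : ℕ) (hk : 3 ≤ k) (ht1 : 1 ≤ t) (hkt : k ≤ 2*t+1)
    (κ : ℕ → ℝ) (hκ1 : κ 1 = 1)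
    (hκA : ∀ p : ℕ, p.Prime → ∀ u : ℕ,
      κ (p ^ (u * k + 1)) = (k : ℝ) * (p : ℝ) ^ (-(u : ℝ) - 1/2))
    (hκB : ∀ p : ℕ, p.Prime → ∀ u v : ℕ, 2 ≤ v → v ≤ k →
      κ (p ^ (u * k + v)) = (p : ℝ) ^ (-(u : ℝ) - 1))
    (p : ℕ) (hp : p.Prime) (j : ℕ)
    (hterm_nonneg : ∀ i : ℕ, 0 ≤ (p:ℝ)^(i:ℕ) * κ (p^i) ^ (2*t)) :
    κ (p^(j+1)) ^ 2 * ∑ i ∈ Finset.range (j+2), (p:ℝ)^(i:ℕ) * κ (p^i) ^ (2*t)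
      ≤ ((j:ℝ)+2) * (k:ℝ)^(2*t+2) * (p:ℝ) ^ (-(1:ℝ)) := by
  have hp1 : (1:ℝ) ≤ (p:ℝ) := by exact_mod_cast hp.one_lt.le
  have hp0 : (0:ℝ) < (p:ℝ) := lt_of_lt_of_le one_pos hp1
  have hk1 : (1:ℝ) ≤ (k:ℝ) := by exact_mod_cast (by omega : 1 ≤ k)
  have hkr : (k:ℝ) ≤ 2*(t:ℝ)+1 := by exact_mod_cast hkt
  have htr : (1:ℝ) ≤ (t:ℝ) := by exact_mod_cast ht1
  have hkpow : (1:ℝ) ≤ (k:ℝ)^(2*t) := one_le_pow₀ hk1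
  have hkpow0 : (0:ℝ) ≤ (k:ℝ)^(2*t) := le_trans zero_le_one hkpow
  set u := j / k with hu
  have hu0 : (0:ℝ) ≤ (u:ℝ) := Nat.cast_nonneg u
  -- generic sum bound
  have sumb : ∑ i ∈ Finset.range (j+2), (p:ℝ)^(i:ℕ) * κ (p^i) ^ (2*t)
      ≤ ((j:ℝ)+2) * ((k:ℝ)^(2*t) * (p:ℝ) ^ ((u:ℝ)+1)) := by
    have per : ∀ i ∈ Finset.range (j+2), (p:ℝ)^(i:ℕ) * κ (p^i) ^ (2*t)
        ≤ (k:ℝ)^(2*t) * (p:ℝ) ^ ((u:ℝ)+1) := by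
      intro i hi
      refine (stmt14_term k t hk ht1 hkt κ hκ1 hκA hκB p hp i).trans ?_
      refine mul_le_mul_of_nonneg_left (Real.rpow_le_rpow_of_exponent_le hp1 ?_) hkpow0
      have hle : (i-1)/k ≤ u := by
        rw [hu]
        exact Nat.div_le_div_right (by have := Finset.mem_range.mp hi; omega)
      have : (((i-1)/k : ℕ) : ℝ) ≤ (u:ℝ) := by exact_mod_cast hle
      linarith
    calc ∑ i ∈ Finset.range (j+2), (p:ℝ)^(i:ℕ) * κ (p^i) ^ (2*t)
        ≤ ∑ _i ∈ Finset.range (j+2), (k:ℝ)^(2*t) * (p:ℝ) ^ ((u:ℝ)+1) :=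
          Finset.sum_le_sum per
      _ = ((j:ℝ)+2) * ((k:ℝ)^(2*t) * (p:ℝ) ^ ((u:ℝ)+1)) := by
          rw [Finset.sum_const, Finset.card_range, nsmul_eq_mul]
          push_cast; ring
  have hsum_nonneg : 0 ≤ ∑ i ∈ Finset.range (j+2), (p:ℝ)^(i:ℕ) * κ (p^i) ^ (2*t) :=
    Finset.sum_nonneg fun i _ => hterm_nonneg i
  have hj2 : (0:ℝ) ≤ (j:ℝ)+2 := by positivity
  have hksum0 : (0:ℝ) ≤ (k:ℝ)^2 * (p:ℝ) ^ (-2*((u:ℕ):ℝ) - 1) := by positivity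
  have hcollapse : (p:ℝ) ^ (-2*(u:ℝ)-1) * (p:ℝ) ^ ((u:ℝ)+1) = (p:ℝ) ^ (-(u:ℝ)) := by
    rw [← Real.rpow_add hp0]; ring_nf
  have hkk : (k:ℝ)^2 * (k:ℝ)^(2*t) = (k:ℝ)^(2*t+2) := by
    rw [← pow_add]; ring_nf
  rcases Nat.eq_zero_or_pos u with hu0' | hu1
  · -- u = 0
    rcases Nat.eq_zero_or_pos j with rfl | hj1
    · -- j = 0 : exponent 1, direct
      have hκv : κ (p ^ 1) = (k:ℝ) * (p:ℝ) ^ (-(0:ℝ) - 1/2) := by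
        have := hκA p hp 0
        simpa using this
      have hsum2 : ∑ i ∈ Finset.range 2, (p:ℝ)^(i:ℕ) * κ (p^i) ^ (2*t)
          = 1 + (p:ℝ) * κ (p^1) ^ (2*t) := by
        rw [Finset.sum_range_succ, Finset.sum_range_one]
        simp [hκ1]
      have hterm1 : (p:ℝ) * κ (p^1) ^ (2*t) ≤ (k:ℝ)^(2*t) := by
        rw [hκv, mul_pow]
        have hpe : ((p:ℝ) ^ (-(0:ℝ) - 1/2)) ^ (2*t) = (p:ℝ) ^ ((-(0:ℝ) - 1/2) * (2*t : ℕ)) := by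
          rw [← Real.rpow_natCast ((p:ℝ) ^ (-(0:ℝ) - 1/2)) (2*t), ← Real.rpow_mul hp0.le]
        rw [hpe]
        have : (p:ℝ) * ((k:ℝ)^(2*t) * (p:ℝ) ^ ((-(0:ℝ) - 1/2) * (2*t : ℕ)))
            = (k:ℝ)^(2*t) * ((p:ℝ) ^ (1 + (-(0:ℝ) - 1/2) * (2*t : ℕ))) := by
          rw [Real.rpow_add hp0, Real.rpow_one]; ring
        rw [this]
        have hle1 : (p:ℝ) ^ (1 + (-(0:ℝ) - 1/2) * (2*t : ℕ)) ≤ 1 := by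
          refine Real.rpow_le_one_of_one_le_of_nonpos hp1 ?_
          push_cast; nlinarith
        nlinarith
      have hκsq : κ (p^1) ^ 2 = (k:ℝ)^2 * (p:ℝ) ^ (-(1:ℝ)) := by
        rw [hκv, mul_pow]
        have : ((p:ℝ) ^ (-(0:ℝ) - 1/2)) ^ 2 = (p:ℝ) ^ ((-(0:ℝ) - 1/2) * (2:ℕ)) := by
          rw [← Real.rpow_natCast ((p:ℝ) ^ (-(0:ℝ) - 1/2)) 2, ← Real.rpow_mul hp0.le]
        rw [this]
        norm_num
      simp only [Nat.cast_zero, zero_add] 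
      rw [hκsq, hsum2]
      have hp0' : (0:ℝ) ≤ (p:ℝ) ^ (-(1:ℝ)) := Real.rpow_nonneg hp0.le _
      have h1k : (1:ℝ) ≤ (k:ℝ)^(2*t) := hkpow
      have : (k:ℝ)^2 * (1 + (p:ℝ) * κ (p^1) ^ (2*t)) ≤ (k:ℝ)^2 * (2 * (k:ℝ)^(2*t)) := by
        have hterm0 : 0 ≤ (p:ℝ) * κ (p^1) ^ (2*t) := by
          have := hterm_nonneg 1; simpa using this
        nlinarith [one_le_pow₀ hk1 (n:=2)]
      calc (k:ℝ)^2 * (p:ℝ) ^ (-(1:ℝ)) * (1 + (p:ℝ) * κ (p^1) ^ (2*t))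
          = ((k:ℝ)^2 * (1 + (p:ℝ) * κ (p^1) ^ (2*t))) * (p:ℝ) ^ (-(1:ℝ)) := by ring
        _ ≤ ((k:ℝ)^2 * (2 * (k:ℝ)^(2*t))) * (p:ℝ) ^ (-(1:ℝ)) :=
            mul_le_mul_of_nonneg_right this hp0'
        _ = 2 * (k:ℝ)^(2*t+2) * (p:ℝ) ^ (-(1:ℝ)) := by
            rw [← hkk]; ring
    · -- u = 0, j ≥ 1 : 2 ≤ j+1 ≤ k
      have hjk : j + 1 ≤ k := by
        have : j < k := by
          by_contra hcon
          have : 1 ≤ j / k := Nat.one_le_div_iff (by omega) |>.mpr (by omega)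
          omega
        omega
      have hκv : κ (p ^ (j+1)) = (p:ℝ) ^ (-(0:ℝ) - 1) := by
        have := hκB p hp 0 (j+1) (by omega) hjk
        simpa using this
      have hκsq : κ (p^(j+1)) ^ 2 = (p:ℝ) ^ (-(2:ℝ)) := by
        rw [hκv]
        rw [← Real.rpow_natCast ((p:ℝ) ^ (-(0:ℝ) - 1)) 2, ← Real.rpow_mul hp0.le]
        norm_num
      rw [hκsq]
      have hu0eq : ((u:ℕ):ℝ) = 0 := by rw [hu0']; norm_num
      rw [hu0eq] at sumb
      calc (p:ℝ) ^ (-(2:ℝ)) * ∑ i ∈ Finset.range (j+2), (p:ℝ)^(i:ℕ) * κ (p^i) ^ (2*t)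
          ≤ (p:ℝ) ^ (-(2:ℝ)) * (((j:ℝ)+2) * ((k:ℝ)^(2*t) * (p:ℝ) ^ ((0:ℝ)+1))) :=
            mul_le_mul_of_nonneg_left sumb (Real.rpow_nonneg hp0.le _)
        _ = ((j:ℝ)+2) * (k:ℝ)^(2*t) * ((p:ℝ) ^ (-(2:ℝ)) * (p:ℝ) ^ ((0:ℝ)+1)) := by ring
        _ = ((j:ℝ)+2) * (k:ℝ)^(2*t) * (p:ℝ) ^ (-(1:ℝ)) := by
            rw [← Real.rpow_add hp0]
            norm_num
        _ ≤ ((j:ℝ)+2) * (k:ℝ)^(2*t+2) * (p:ℝ) ^ (-(1:ℝ)) := by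
            gcongr
            · omega
  · -- u ≥ 1
    have hmain := mul_le_mul (stmt14_sq k t hk κ hκA hκB p hp j) sumb hsum_nonneg hksum0
    refine hmain.trans ?_
    calc (k:ℝ)^2 * (p:ℝ) ^ (-2*((u:ℕ):ℝ) - 1) * (((j:ℝ)+2) * ((k:ℝ)^(2*t) * (p:ℝ) ^ ((u:ℝ)+1)))
        = ((j:ℝ)+2) * (k:ℝ)^(2*t+2) * ((p:ℝ) ^ (-2*(u:ℝ)-1) * (p:ℝ) ^ ((u:ℝ)+1)) := by
          rw [← hkk]; ring
      _ = ((j:ℝ)+2) * (k:ℝ)^(2*t+2) * (p:ℝ) ^ (-(u:ℝ)) := by rw [hcollapse]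
      _ ≤ ((j:ℝ)+2) * (k:ℝ)^(2*t+2) * (p:ℝ) ^ (-(1:ℝ)) := by
          refine mul_le_mul_of_nonneg_left (Real.rpow_le_rpow_of_exponent_le hp1 ?_) ?_
          · have : (1:ℝ) ≤ (u:ℝ) := by exact_mod_cast hu1
            linarith
          · positivity

private lemma stmt14_divmul (t : ℕ) (κ : ℕ → ℝ) (hκ1 : κ 1 = 1)
    (hκmul : ∀ m n : ℕ, Nat.Coprime m n → κ (m * n) = κ m * κ n)
    (m n : ℕ) (hmn : Nat.Coprime m n) :
    (∑ r ∈ (m*n).divisors, (r:ℝ) * κ r ^ (2*t))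
      = (∑ r ∈ m.divisors, (r:ℝ) * κ r ^ (2*t))
        * (∑ r ∈ n.divisors, (r:ℝ) * κ r ^ (2*t)) := by
  classical
  let h : ArithmeticFunction ℝ := ⟨fun r => (r:ℝ) * κ r ^ (2*t), by simp⟩
  have hh : h.IsMultiplicative := by
    constructor
    · show (1:ℕ) * κ 1 ^ (2*t) = 1
      simp [hκ1]
    · intro a b hc
      show ((a*b : ℕ):ℝ) * κ (a*b) ^ (2*t) = ((a:ℕ):ℝ) * κ a ^ (2*t) * (((b:ℕ):ℝ) * κ b ^ (2*t))
      push_cast [hκmul _ _ hc]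
      ring
  have key := (hh.mul (ArithmeticFunction.isMultiplicative_zeta.natCast)).map_mul_of_coprime hmn
  rw [ArithmeticFunction.coe_mul_zeta_apply, ArithmeticFunction.coe_mul_zeta_apply, ArithmeticFunction.coe_mul_zeta_apply] at key
  simpa only [ArithmeticFunction.coe_mk, h] using key



/-- Let `k ≥ 3` and `t ≥ ⌊k/2⌋` be integers. Then for every `ε > 0`,
`Σ_{1 ≤ q ≤ Q} κ(q)²·Σ_{r | q} r·κ(r)^{2t} ≪_ε Q^ε`, uniformly for `Q ≥ 1`. -/
theorem stmt14 (k t : ℕ) (hk : 3 ≤ k) (ht : k / 2 ≤ t) (κ : ℕ → ℝ)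
    (hκ1 : κ 1 = 1)
    (hκmul : ∀ m n : ℕ, Nat.Coprime m n → κ (m * n) = κ m * κ n)
    (hκA : ∀ p : ℕ, p.Prime → ∀ u : ℕ,
      κ (p ^ (u * k + 1)) = (k : ℝ) * (p : ℝ) ^ (-(u : ℝ) - 1/2))
    (hκB : ∀ p : ℕ, p.Prime → ∀ u v : ℕ, 2 ≤ v → v ≤ k →
      κ (p ^ (u * k + v)) = (p : ℝ) ^ (-(u : ℝ) - 1))
    (ε : ℝ) (hε : 0 < ε) :
    ∃ C : ℝ, 0 < C ∧ ∀ Q : ℝ, 1 ≤ Q →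
      ∑ q ∈ Finset.Icc 1 ⌊Q⌋₊,
        κ q ^ 2 * ∑ r ∈ q.divisors, (r : ℝ) * κ r ^ (2 * t)
      ≤ C * Q ^ ε := by
  classical
  have hkt : k ≤ 2*t+1 := by omega
  have ht1 : 1 ≤ t := by omega
  have htermnn : ∀ r : ℕ, 0 ≤ (r:ℝ) * κ r ^ (2*t) := fun r =>
    mul_nonneg (Nat.cast_nonneg r) ((even_two_mul t).pow_nonneg _)
  set F : ℕ → ℝ := fun q =>
    (κ q ^ 2 * ∑ r ∈ q.divisors, (r : ℝ) * κ r ^ (2 * t)) * (q:ℝ) ^ (-ε) with hF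
  have hFnn : ∀ q, 0 ≤ F q := fun q =>
    mul_nonneg (mul_nonneg (sq_nonneg _) (Finset.sum_nonneg fun r _ => htermnn r))
      (Real.rpow_nonneg (Nat.cast_nonneg q) _)
  have hF1 : F 1 = 1 := by
    simp [hF, Nat.divisors_one, hκ1]
  have hFmul : ∀ {m n : ℕ}, Nat.Coprime m n → F (m*n) = F m * F n := by
    intro m n hmn
    have h1 := stmt14_divmul t κ hκ1 hκmul m n hmn
    have h2 : κ (m*n)^2 = κ m ^2 * κ n ^2 := by rw [hκmul m n hmn]; ring
    have h3 : ((m*n : ℕ):ℝ) ^ (-ε) = (m:ℝ)^(-ε) * (n:ℝ)^(-ε) := by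
      push_cast
      exact Real.mul_rpow (Nat.cast_nonneg m) (Nat.cast_nonneg n)
    simp only [hF, h1, h2, h3]
    ring
  -- constants
  set ρ : ℝ := (2:ℝ) ^ (-ε) with hρ
  have hρ0 : 0 ≤ ρ := Real.rpow_nonneg (by norm_num) _
  have hρ1 : ρ < 1 := Real.rpow_lt_one_of_one_lt_of_neg (by norm_num) (by linarith)
  have hS2 : Summable (fun n : ℕ => ((n:ℝ)+2) * ρ^n) := by
    have s1 : Summable (fun n : ℕ => (n:ℝ) * ρ^n) := by
      simpa [pow_one] using summable_pow_mul_geometric_of_norm_lt_one 1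
        (r := ρ) (by rwa [Real.norm_eq_abs, abs_of_nonneg hρ0])
    have s2 : Summable (fun n : ℕ => ρ^n) := summable_geometric_of_lt_one hρ0 hρ1
    exact Summable.congr (s1.add (s2.mul_left 2)) (fun n => by ring)
  set A : ℝ := ∑' n : ℕ, ((n:ℝ)+2) * ρ^n with hA
  have hA0 : 0 ≤ A := tsum_nonneg fun n => mul_nonneg (by positivity) (pow_nonneg hρ0 n)
  set Kc : ℝ := (k:ℝ)^(2*t+2) with hKc
  have hKc0 : 0 ≤ Kc := by positivity
  have hZs : Summable (fun n : ℕ => (n:ℝ) ^ (-(1+ε))) :=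
    Real.summable_nat_rpow.mpr (by linarith)
  set Z : ℝ := ∑' n : ℕ, (n:ℝ) ^ (-(1+ε)) with hZ
  -- per prime-power bound
  have hFpp : ∀ p : ℕ, p.Prime → ∀ n : ℕ,
      F (p ^ (n+1)) ≤ (((n:ℝ)+2) * Kc * (p:ℝ) ^ (-(1:ℝ))) * ((p:ℝ) ^ (-ε)) ^ (n+1) := by
    intro p hp n
    have hp1 : (1:ℝ) ≤ (p:ℝ) := by exact_mod_cast hp.one_lt.le
    have hp0 : (0:ℝ) < (p:ℝ) := lt_of_lt_of_le one_pos hp1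
    have hdiv : ∑ r ∈ (p ^ (n+1)).divisors, (r : ℝ) * κ r ^ (2 * t)
        = ∑ i ∈ Finset.range (n+2), (p:ℝ)^(i:ℕ) * κ (p^i) ^ (2*t) := by
      rw [Nat.divisors_prime_pow hp, Finset.sum_map]
      simp only [Function.Embedding.coeFn_mk]
      push_cast
      rfl
    have hre : ((p^(n+1) : ℕ):ℝ) ^ (-ε) = ((p:ℝ) ^ (-ε)) ^ (n+1) := by
      push_cast
      rw [← Real.rpow_natCast ((p:ℝ)) (n+1), ← Real.rpow_mul hp0.le, mul_comm,
        Real.rpow_mul hp0.le, Real.rpow_natCast]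
    have hg := stmt14_g k t hk ht1 hkt κ hκ1 hκA hκB p hp n
      (fun i => mul_nonneg (by positivity) ((even_two_mul t).pow_nonneg _))
    calc F (p^(n+1))
        = (κ (p^(n+1)) ^ 2 * ∑ i ∈ Finset.range (n+2), (p:ℝ)^(i:ℕ) * κ (p^i) ^ (2*t))
            * ((p:ℝ) ^ (-ε)) ^ (n+1) := by
          rw [hF]
          simp only
          rw [hdiv, hre]
      _ ≤ (((n:ℝ)+2) * Kc * (p:ℝ) ^ (-(1:ℝ))) * ((p:ℝ) ^ (-ε)) ^ (n+1) :=
          mul_le_mul_of_nonneg_right hg (by positivity)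
  -- summability at each prime
  have hsp : ∀ p : ℕ, p.Prime → Summable (fun n : ℕ => ‖F (p ^ n)‖) := by
    intro p hp
    have hp1 : (1:ℝ) ≤ (p:ℝ) := by exact_mod_cast hp.one_lt.le
    have hp0 : (0:ℝ) < (p:ℝ) := lt_of_lt_of_le one_pos hp1
    have hp2 : (2:ℝ) ≤ (p:ℝ) := by exact_mod_cast hp.two_le
    have hpρ : (p:ℝ) ^ (-ε) ≤ ρ := by
      rw [hρ, Real.rpow_neg hp0.le, Real.rpow_neg (by norm_num)]
      exact inv_anti₀ (Real.rpow_pos_of_pos (by norm_num) ε)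
        (Real.rpow_le_rpow (by norm_num) hp2 hε.le)
    have hpρ0 : 0 ≤ (p:ℝ) ^ (-ε) := Real.rpow_nonneg hp0.le _
    rw [← summable_nat_add_iff 1]
    refine Summable.of_nonneg_of_le (fun n => norm_nonneg _) (fun n => ?_)
      (hS2.mul_left (Kc * (p:ℝ) ^ (-(1:ℝ)) * ρ))
    rw [Real.norm_of_nonneg (hFnn _)]
    calc F (p^(n+1)) ≤ (((n:ℝ)+2) * Kc * (p:ℝ) ^ (-(1:ℝ))) * ((p:ℝ) ^ (-ε)) ^ (n+1) :=
          hFpp p hp n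
      _ ≤ (((n:ℝ)+2) * Kc * (p:ℝ) ^ (-(1:ℝ))) * ρ ^ (n+1) := by
          refine mul_le_mul_of_nonneg_left (pow_le_pow_left₀ hpρ0 hpρ (n+1)) ?_
          positivity
      _ = (Kc * (p:ℝ) ^ (-(1:ℝ)) * ρ) * (((n:ℝ)+2) * ρ^n) := by ring
  -- local tsum bound
  have hts : ∀ p : ℕ, p.Prime →
      (∑' n : ℕ, F (p^n)) ≤ 1 + (Kc * A) * (p:ℝ) ^ (-(1+ε)) := by
    intro p hp
    have hp1 : (1:ℝ) ≤ (p:ℝ) := by exact_mod_cast hp.one_lt.le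
    have hp0 : (0:ℝ) < (p:ℝ) := lt_of_lt_of_le one_pos hp1
    have hp2 : (2:ℝ) ≤ (p:ℝ) := by exact_mod_cast hp.two_le
    have hpρ : (p:ℝ) ^ (-ε) ≤ ρ := by
      rw [hρ, Real.rpow_neg hp0.le, Real.rpow_neg (by norm_num)]
      exact inv_anti₀ (Real.rpow_pos_of_pos (by norm_num) ε)
        (Real.rpow_le_rpow (by norm_num) hp2 hε.le)
    have hpρ0 : 0 ≤ (p:ℝ) ^ (-ε) := Real.rpow_nonneg hp0.le _
    have hsumm : Summable (fun n : ℕ => F (p^n)) := (hsp p hp).of_norm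
    have hsumm1 : Summable (fun n : ℕ => F (p^(n+1))) :=
      hsumm.comp_injective (add_left_injective 1)
    rw [Summable.tsum_eq_zero_add hsumm]
    have h0 : F (p^0) = 1 := by rw [pow_zero, hF1]
    rw [h0]
    have hcomb : (p:ℝ) ^ (-(1:ℝ)) * (p:ℝ) ^ (-ε) = (p:ℝ) ^ (-(1+ε)) := by
      rw [← Real.rpow_add hp0]; ring_nf
    have hb : ∀ n : ℕ, F (p^(n+1)) ≤ (Kc * (p:ℝ) ^ (-(1+ε))) * (((n:ℝ)+2) * ρ^n) := by
      intro n
      calc F (p^(n+1)) ≤ (((n:ℝ)+2) * Kc * (p:ℝ) ^ (-(1:ℝ))) * ((p:ℝ) ^ (-ε)) ^ (n+1) :=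
            hFpp p hp n
        _ = (((n:ℝ)+2) * Kc) * ((p:ℝ) ^ (-(1:ℝ)) * (p:ℝ) ^ (-ε)) * ((p:ℝ) ^ (-ε)) ^ n := by
            ring
        _ ≤ (((n:ℝ)+2) * Kc) * ((p:ℝ) ^ (-(1:ℝ)) * (p:ℝ) ^ (-ε)) * ρ ^ n := by
            refine mul_le_mul_of_nonneg_left (pow_le_pow_left₀ hpρ0 hpρ n) ?_
            positivity
        _ = (Kc * ((p:ℝ) ^ (-(1:ℝ)) * (p:ℝ) ^ (-ε))) * (((n:ℝ)+2) * ρ^n) := by ring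
        _ = (Kc * (p:ℝ) ^ (-(1+ε))) * (((n:ℝ)+2) * ρ^n) := by rw [hcomb]
    have htle : (∑' n : ℕ, F (p^(n+1)))
        ≤ ∑' n : ℕ, (Kc * (p:ℝ) ^ (-(1+ε))) * (((n:ℝ)+2) * ρ^n) :=
      Summable.tsum_le_tsum hb hsumm1 (hS2.mul_left _)
    rw [tsum_mul_left] at htle
    have : (Kc * (p:ℝ) ^ (-(1+ε))) * A = (Kc * A) * (p:ℝ) ^ (-(1+ε)) := by ring
    rw [hA] at this ⊢
    linarith [htle, this]
  -- the constant
  refine ⟨Real.exp ((Kc * A) * Z), Real.exp_pos _, fun Q hQ => ?_⟩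
  have hQ0 : (0:ℝ) < Q := lt_of_lt_of_le one_pos hQ
  set N : ℕ := ⌊Q⌋₊ with hN
  obtain ⟨hsN, hhs⟩ := EulerProduct.summable_and_hasSum_smoothNumbers_prod_primesBelow_tsum
    (f := F) hF1 hFmul (fun {p} hp => hsp p hp) (N+1)
  have hsub : Summable (fun m : (N+1).smoothNumbers => F m) := hsN.of_norm
  have hind : Summable (Set.indicator ((N+1).smoothNumbers : Set ℕ) F) :=
    summable_subtype_iff_indicator.mp hsub
  have htsum_eq : (∑' m : (N+1).smoothNumbers, F m)
      = ∏ p ∈ (N+1).primesBelow, ∑' n : ℕ, F (p^n) := hhs.tsum_eq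
  have hprod : (∏ p ∈ (N+1).primesBelow, ∑' n : ℕ, F (p^n))
      ≤ Real.exp ((Kc * A) * Z) := by
    calc (∏ p ∈ (N+1).primesBelow, ∑' n : ℕ, F (p^n))
        ≤ ∏ p ∈ (N+1).primesBelow, Real.exp ((Kc*A) * (p:ℝ) ^ (-(1+ε))) := by
          refine Finset.prod_le_prod (fun p _ => tsum_nonneg fun n => hFnn _) ?_
          intro p hpm
          refine (hts p (Nat.prime_of_mem_primesBelow hpm)).trans ?_
          have := Real.add_one_le_exp ((Kc*A) * (p:ℝ) ^ (-(1+ε)))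
          linarith
      _ = Real.exp (∑ p ∈ (N+1).primesBelow, (Kc*A) * (p:ℝ) ^ (-(1+ε))) :=
          (Real.exp_sum _ _).symm
      _ ≤ Real.exp ((Kc*A) * Z) := by
          rw [Real.exp_le_exp, ← Finset.mul_sum, hZ]
          refine mul_le_mul_of_nonneg_left ?_ (mul_nonneg hKc0 hA0)
          exact Summable.sum_le_tsum _ (fun i _ => Real.rpow_nonneg (Nat.cast_nonneg i) _) hZs
  have hIcc : (∑ q ∈ Finset.Icc 1 N, F q) ≤ Real.exp ((Kc*A)*Z) := by
    have hmem : ∀ q ∈ Finset.Icc 1 N, q ∈ (N+1).smoothNumbers := by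
      intro q hq
      rw [Finset.mem_Icc] at hq
      exact Nat.mem_smoothNumbers_of_lt (by omega) (by omega)
    calc ∑ q ∈ Finset.Icc 1 N, F q
        = ∑ q ∈ Finset.Icc 1 N, Set.indicator ((N+1).smoothNumbers : Set ℕ) F q :=
          Finset.sum_congr rfl fun q hq => (Set.indicator_of_mem (hmem q hq) F).symm
      _ ≤ ∑' q : ℕ, Set.indicator ((N+1).smoothNumbers : Set ℕ) F q :=
          Summable.sum_le_tsum _ (fun i _ => Set.indicator_nonneg (fun a _ => hFnn a) i) hind
      _ = ∑' m : (N+1).smoothNumbers, F m := (tsum_subtype _ F).symm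
      _ = ∏ p ∈ (N+1).primesBelow, ∑' n : ℕ, F (p^n) := htsum_eq
      _ ≤ Real.exp ((Kc*A)*Z) := hprod
  have hfF : ∀ q ∈ Finset.Icc 1 N,
      κ q ^ 2 * (∑ r ∈ q.divisors, (r : ℝ) * κ r ^ (2 * t)) ≤ F q * Q ^ ε := by
    intro q hq
    rw [Finset.mem_Icc] at hq
    have hq0 : (0:ℝ) < (q:ℝ) := by exact_mod_cast hq.1
    have hqQ : (q:ℝ) ≤ Q := le_trans (by exact_mod_cast hq.2) (Nat.floor_le hQ0.le)
    have heq : F q * (q:ℝ) ^ ε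
        = κ q ^ 2 * (∑ r ∈ q.divisors, (r : ℝ) * κ r ^ (2 * t)) := by
      rw [hF]
      simp only
      rw [mul_assoc, ← Real.rpow_add hq0]
      norm_num
    calc κ q ^ 2 * (∑ r ∈ q.divisors, (r : ℝ) * κ r ^ (2 * t))
        = F q * (q:ℝ) ^ ε := heq.symm
      _ ≤ F q * Q ^ ε :=
          mul_le_mul_of_nonneg_left (Real.rpow_le_rpow hq0.le hqQ hε.le) (hFnn q)
  calc ∑ q ∈ Finset.Icc 1 N, κ q ^ 2 * (∑ r ∈ q.divisors, (r : ℝ) * κ r ^ (2 * t))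
      ≤ ∑ q ∈ Finset.Icc 1 N, F q * Q ^ ε := Finset.sum_le_sum hfF
    _ = (∑ q ∈ Finset.Icc 1 N, F q) * Q ^ ε := (Finset.sum_mul _ _ _).symm
    _ ≤ Real.exp ((Kc*A)*Z) * Q ^ ε :=
        mul_le_mul_of_nonneg_right hIcc (Real.rpow_nonneg hQ0.le ε)
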